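/- arXiv:2005.09229 — 6 statements merged into one kernel-verified Lean document; each statement's English description precedes it below -/
import Mathlib

section
/- Let Θ be a symmetric n×n real matrix with nonnegative entries, Ω a symmetric k×k real matrix with nonnegative entries, S an n×k real matrix with nonnegative entries, and S' an n×k real matrix with strictly positive entries. Then Σ_{i=1}^n Σ_{s=1}^k ( (Θ S' Ω)_{is} · S_{is}² ) / S'_{is} ≥ Tr( Sᵀ Θ S Ω ). -/
open Matrix BigOperators

private lemma djj_swap4 {n k : ℕ} (A : Fin n → Fin k → Fin n → Fin k → ℝ) :
    ∑ i, ∑ s, ∑ j, ∑ t, A i s j t = ∑ i, ∑ s, ∑ j, ∑ t, A j t i s := by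
  calc ∑ i, ∑ s, ∑ j, ∑ t, A i s j t
      = ∑ i, ∑ j, ∑ s, ∑ t, A i s j t :=
        Finset.sum_congr rfl fun i _ => Finset.sum_comm
    _ = ∑ j, ∑ i, ∑ s, ∑ t, A i s j t := Finset.sum_comm
    _ = ∑ j, ∑ i, ∑ t, ∑ s, A i s j t :=
        Finset.sum_congr rfl fun j _ => Finset.sum_congr rfl fun i _ => Finset.sum_comm
    _ = ∑ j, ∑ t, ∑ i, ∑ s, A i s j t :=
        Finset.sum_congr rfl fun j _ => Finset.sum_comm
    _ = ∑ i, ∑ s, ∑ j, ∑ t, A j t i s := rfl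

private lemma djj_reorder4 {n k : ℕ} (A : Fin n → Fin k → Fin n → Fin k → ℝ) :
    ∑ s, ∑ t, ∑ j, ∑ i, A i s j t = ∑ i, ∑ s, ∑ j, ∑ t, A i s j t := by
  calc ∑ s, ∑ t, ∑ j, ∑ i, A i s j t
      = ∑ s, ∑ t, ∑ i, ∑ j, A i s j t :=
        Finset.sum_congr rfl fun s _ => Finset.sum_congr rfl fun t _ => Finset.sum_comm
    _ = ∑ s, ∑ i, ∑ t, ∑ j, A i s j t :=
        Finset.sum_congr rfl fun s _ => Finset.sum_comm
    _ = ∑ i, ∑ s, ∑ t, ∑ j, A i s j t := Finset.sum_comm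
    _ = ∑ i, ∑ s, ∑ j, ∑ t, A i s j t :=
        Finset.sum_congr rfl fun i _ => Finset.sum_congr rfl fun s _ => Finset.sum_comm

/-- Ding–Li–Jordan inequality: for symmetric nonnegative Θ, Ω, nonnegative S and
strictly positive S', Σᵢₛ (Θ S' Ω)ᵢₛ Sᵢₛ² / S'ᵢₛ ≥ Tr(Sᵀ Θ S Ω). -/
theorem ding_li_jordan_inequality (n k : ℕ)
    (Θ : Matrix (Fin n) (Fin n) ℝ) (hΘsymm : Θ.IsSymm) (hΘ : ∀ i j, 0 ≤ Θ i j)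
    (Ω : Matrix (Fin k) (Fin k) ℝ) (hΩsymm : Ω.IsSymm) (hΩ : ∀ i j, 0 ≤ Ω i j)
    (S : Matrix (Fin n) (Fin k) ℝ) (hS : ∀ i j, 0 ≤ S i j)
    (S' : Matrix (Fin n) (Fin k) ℝ) (hS' : ∀ i j, 0 < S' i j) :
    Matrix.trace (Sᵀ * Θ * S * Ω)
      ≤ ∑ i, ∑ s, (Θ * S' * Ω) i s * (S i s) ^ 2 / S' i s := by
  set L : Fin n → Fin k → Fin n → Fin k → ℝ :=
    fun i s j t => Θ i j * S j t * Ω t s * S i s with hL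
  set R : Fin n → Fin k → Fin n → Fin k → ℝ :=
    fun i s j t => Θ i j * S' j t * Ω t s * S i s ^ 2 / S' i s with hR
  have e1 : Matrix.trace (Sᵀ * Θ * S * Ω) = ∑ i, ∑ s, ∑ j, ∑ t, L i s j t := by
    simp only [Matrix.trace, Matrix.diag, Matrix.mul_apply, Matrix.transpose_apply,
      Finset.sum_mul, Finset.mul_sum]
    rw [← djj_reorder4]
    refine Finset.sum_congr rfl fun s _ => Finset.sum_congr rfl fun t _ =>
      Finset.sum_congr rfl fun j _ => Finset.sum_congr rfl fun i _ => by
        simp only [hL]; ring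
  have e2 : (∑ i, ∑ s, (Θ * S' * Ω) i s * (S i s) ^ 2 / S' i s)
      = ∑ i, ∑ s, ∑ j, ∑ t, R i s j t := by
    simp only [Matrix.mul_apply, Finset.sum_mul, Finset.mul_sum, Finset.sum_div]
    refine Finset.sum_congr rfl fun i _ => Finset.sum_congr rfl fun s _ => ?_
    rw [Finset.sum_comm]
  rw [e1, e2]
  have key : ∀ i s j t, 2 * L i s j t ≤ R i s j t + R j t i s := by
    intro i s j t
    simp only [hL, hR, hΘsymm.apply, hΩsymm.apply]
    have ha' := hS' i s
    have hb' := hS' j t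
    rw [div_add_div _ _ (ne_of_gt ha') (ne_of_gt hb'), le_div_iff₀ (by positivity)]
    nlinarith [mul_nonneg (mul_nonneg (hΘ i j) (hΩ s t))
        (sq_nonneg (S i s * S' j t - S j t * S' i s)),
      mul_nonneg (hΘ i j) (hΩ s t), hS i s, hS j t]
  have hsum : ∑ i, ∑ s, ∑ j, ∑ t, 2 * L i s j t
      ≤ ∑ i, ∑ s, ∑ j, ∑ t, (R i s j t + R j t i s) :=
    Finset.sum_le_sum fun i _ => Finset.sum_le_sum fun s _ =>
      Finset.sum_le_sum fun j _ => Finset.sum_le_sum fun t _ => key i s j t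
  have h2L : ∑ i, ∑ s, ∑ j, ∑ t, 2 * L i s j t
      = 2 * ∑ i, ∑ s, ∑ j, ∑ t, L i s j t := by
    simp only [Finset.mul_sum]
  have h2R : ∑ i, ∑ s, ∑ j, ∑ t, (R i s j t + R j t i s)
      = 2 * ∑ i, ∑ s, ∑ j, ∑ t, R i s j t := by
    simp only [Finset.sum_add_distrib]
    rw [djj_swap4 (fun i s j t => R j t i s)]
    ring
  rw [h2L, h2R] at hsum
  linarith
end

section
/- Let A be a symmetric k×k real matrix with nonnegative entries, and let V and V' be n×k real matrices with strictly positive entries. Then Tr(V A Vᵀ) ≥ Σ_{i=1}^n Σ_{k=1}^k Σ_{l=1}^k A_{kl} · v'_{ik} · v'_{il} · (1 + log( (v_{ik} v_{il}) / (v'_{ik} v'_{il}) )). -/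
open Matrix BigOperators Real

/-- Logarithmic lower bound for the quadratic form: for symmetric A ≥ 0 and
V, V' > 0 entrywise, Tr(V A Vᵀ) ≥ Σᵢₖₗ Aₖₗ v'ᵢₖ v'ᵢₗ (1 + log(vᵢₖvᵢₗ/(v'ᵢₖv'ᵢₗ))). -/
theorem quadratic_form_log_lower_bound (n k : ℕ)
    (A : Matrix (Fin k) (Fin k) ℝ) (hAsymm : A.IsSymm) (hA : ∀ i j, 0 ≤ A i j)
    (V : Matrix (Fin n) (Fin k) ℝ) (hV : ∀ i j, 0 < V i j)
    (V' : Matrix (Fin n) (Fin k) ℝ) (hV' : ∀ i j, 0 < V' i j) :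
    ∑ i, ∑ s, ∑ l, A s l * V' i s * V' i l *
        (1 + Real.log (V i s * V i l / (V' i s * V' i l)))
      ≤ Matrix.trace (V * A * Vᵀ) := by
  have htr : Matrix.trace (V * A * Vᵀ) = ∑ i, ∑ s, ∑ l, V i s * A s l * V i l := by
    simp only [Matrix.trace, Matrix.diag, Matrix.mul_apply, Matrix.transpose_apply,
      Finset.sum_mul, Finset.mul_sum]
    refine Finset.sum_congr rfl fun i _ => ?_
    rw [Finset.sum_comm]
  rw [htr]
  refine Finset.sum_le_sum fun i _ => Finset.sum_le_sum fun s _ => Finset.sum_le_sum fun l _ => ?_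
  set α := V i s * V i l / (V' i s * V' i l) with hα
  have hs := (hV' i s).ne'
  have hl := (hV' i l).ne'
  have hαpos : 0 < α :=
    div_pos (mul_pos (hV i s) (hV i l)) (mul_pos (hV' i s) (hV' i l))
  have hlog : 1 + Real.log α ≤ α := by
    have := Real.log_le_sub_one_of_pos hαpos
    linarith
  have hcoef : 0 ≤ A s l * V' i s * V' i l := by
    exact mul_nonneg (mul_nonneg (hA s l) (hV' i s).le) (hV' i l).le
  calc A s l * V' i s * V' i l * (1 + Real.log α)
      ≤ A s l * V' i s * V' i l * α := by
        exact mul_le_mul_of_nonneg_left hlog hcoef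
    _ = V i s * A s l * V i l := by
        rw [hα]
        field_simp
end

section
/- With F and J as defined in the context, for all n×k matrices V and V' with strictly positive entries, J(V, V') ≥ F(V); that is, J is an upper bound for F in its first argument. -/
open Matrix BigOperators Real

noncomputable section

/-- Positive part of a matrix: M⁺ᵢⱼ = (|Mᵢⱼ| + Mᵢⱼ)/2. -/
def mpos {α β : Type*} (M : Matrix α β ℝ) : Matrix α β ℝ :=
  Matrix.of fun i j => (|M i j| + M i j) / 2

/-- Negative part of a matrix: M⁻ᵢⱼ = (|Mᵢⱼ| − Mᵢⱼ)/2. -/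
def mneg {α β : Type*} (M : Matrix α β ℝ) : Matrix α β ℝ :=
  Matrix.of fun i j => (|M i j| - M i j) / 2

/-- Degree matrix of a weight matrix: diagonal with Dᵢᵢ = Σⱼ Wᵢⱼ. -/
def dmat {n : ℕ} (W : Matrix (Fin n) (Fin n) ℝ) : Matrix (Fin n) (Fin n) ℝ :=
  Matrix.diagonal (fun i => ∑ j, W i j)

/-- The objective F(V) of the V-subproblem (eq. (17) in the paper). -/
def Fobj {n k : ℕ} (B₁ B₂ : Matrix (Fin n) (Fin k) ℝ)
    (A₁ A₂ : Matrix (Fin k) (Fin k) ℝ)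
    (WP WQ : Matrix (Fin n) (Fin n) ℝ) (lam : ℝ)
    (V : Matrix (Fin n) (Fin k) ℝ) : ℝ :=
  -2 * Matrix.trace (Vᵀ * mpos B₁) + 2 * Matrix.trace (Vᵀ * mneg B₁)
    + Matrix.trace (V * mpos A₁ * Vᵀ) - Matrix.trace (V * mneg A₁ * Vᵀ)
    - 2 * Matrix.trace (Vᵀ * mpos B₂) + 2 * Matrix.trace (Vᵀ * mneg B₂)
    + Matrix.trace (V * mpos A₂ * Vᵀ) - Matrix.trace (V * mneg A₂ * Vᵀ)
    + lam * Matrix.trace (Vᵀ * dmat WP * V) - lam * Matrix.trace (Vᵀ * WP * V)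
    + lam * Matrix.trace (Vᵀ * dmat WQ * V) - lam * Matrix.trace (Vᵀ * WQ * V)

/-- The auxiliary function J(V, V') of Lemma 3 in the paper. -/
def Jaux {n k : ℕ} (B₁ B₂ : Matrix (Fin n) (Fin k) ℝ)
    (A₁ A₂ : Matrix (Fin k) (Fin k) ℝ)
    (WP WQ : Matrix (Fin n) (Fin n) ℝ) (lam : ℝ)
    (V V' : Matrix (Fin n) (Fin k) ℝ) : ℝ :=
  -2 * ∑ i, ∑ s, mpos B₁ i s * V' i s * (1 + Real.log (V i s / V' i s))
    + 2 * ∑ i, ∑ s, mneg B₁ i s * ((V i s) ^ 2 + (V' i s) ^ 2) / (2 * V' i s)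
    + ∑ i, ∑ s, (V' * mpos A₁) i s * (V i s) ^ 2 / V' i s
    - ∑ i, ∑ s, ∑ l, mneg A₁ s l * V' i s * V' i l *
        (1 + Real.log (V i s * V i l / (V' i s * V' i l)))
    - 2 * ∑ i, ∑ s, mpos B₂ i s * V' i s * (1 + Real.log (V i s / V' i s))
    + 2 * ∑ i, ∑ s, mneg B₂ i s * ((V i s) ^ 2 + (V' i s) ^ 2) / (2 * V' i s)
    + ∑ i, ∑ s, (V' * mpos A₂) i s * (V i s) ^ 2 / V' i s
    - ∑ i, ∑ s, ∑ l, mneg A₂ s l * V' i s * V' i l *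
        (1 + Real.log (V i s * V i l / (V' i s * V' i l)))
    + lam * ∑ i, ∑ s, (dmat WP * V') i s * (V i s) ^ 2 / V' i s
    - lam * ∑ a, ∑ c, ∑ j, WP a c * V' a j * V' c j *
        (1 + Real.log (V a j * V c j / (V' a j * V' c j)))
    + lam * ∑ i, ∑ s, (dmat WQ * V') i s * (V i s) ^ 2 / V' i s
    - lam * ∑ a, ∑ c, ∑ j, WQ a c * V' a j * V' c j *
        (1 + Real.log (V a j * V c j / (V' a j * V' c j)))

/- ### Auxiliary lemmas -/

lemma log_helper (b v v' : ℝ) (hb : 0 ≤ b) (hv : 0 < v) (hv' : 0 < v') :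
    b * v' * (1 + Real.log (v / v')) ≤ b * v := by
  have h1 : 1 + Real.log (v / v') ≤ v / v' := by
    linarith [Real.log_le_sub_one_of_pos (div_pos hv hv')]
  have h2 : v' * (1 + Real.log (v / v')) ≤ v := by
    calc v' * (1 + Real.log (v / v')) ≤ v' * (v / v') :=
          mul_le_mul_of_nonneg_left h1 hv'.le
      _ = v := by field_simp
  calc b * v' * (1 + Real.log (v / v')) = b * (v' * (1 + Real.log (v / v'))) := by ring
    _ ≤ b * v := mul_le_mul_of_nonneg_left h2 hb

lemma quad_helper (b v v' : ℝ) (hb : 0 ≤ b) (hv' : 0 < v') :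
    b * v ≤ b * (v ^ 2 + v' ^ 2) / (2 * v') := by
  rw [mul_div_assoc]
  refine mul_le_mul_of_nonneg_left ?_ hb
  rw [le_div_iff₀ (by positivity)]
  nlinarith [sq_nonneg (v - v')]

lemma tr1 {n k : ℕ} (M V : Matrix (Fin n) (Fin k) ℝ) :
    Matrix.trace (Vᵀ * M) = ∑ i, ∑ s, M i s * V i s := by
  simp only [Matrix.trace, Matrix.diag_apply, Matrix.mul_apply, Matrix.transpose_apply]
  rw [Finset.sum_comm]
  exact Finset.sum_congr rfl fun i _ => Finset.sum_congr rfl fun s _ => mul_comm _ _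

lemma tr2 {n k : ℕ} (A : Matrix (Fin k) (Fin k) ℝ) (V : Matrix (Fin n) (Fin k) ℝ) :
    Matrix.trace (V * A * Vᵀ) = ∑ i, ∑ s, ∑ l, V i s * A s l * V i l := by
  simp only [Matrix.trace, Matrix.diag_apply, Matrix.mul_apply, Matrix.transpose_apply,
    Finset.sum_mul]
  exact Finset.sum_congr rfl fun i _ => Finset.sum_comm

lemma trW {n k : ℕ} (W : Matrix (Fin n) (Fin n) ℝ) (V : Matrix (Fin n) (Fin k) ℝ) :
    Matrix.trace (Vᵀ * W * V) = ∑ a, ∑ c, ∑ j, W a c * V a j * V c j := by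
  rw [Matrix.mul_assoc, tr1]
  simp only [Matrix.mul_apply, Finset.sum_mul]
  refine Finset.sum_congr rfl fun a _ => ?_
  rw [show (∑ s, ∑ j, W a j * V j s * V a s) = ∑ j, ∑ s, W a j * V j s * V a s from
    Finset.sum_comm]
  exact Finset.sum_congr rfl fun c _ => Finset.sum_congr rfl fun j _ => by ring

lemma trD {n k : ℕ} (W : Matrix (Fin n) (Fin n) ℝ) (V : Matrix (Fin n) (Fin k) ℝ) :
    Matrix.trace (Vᵀ * dmat W * V) = ∑ i, ∑ s, (∑ j, W i j) * V i s ^ 2 := by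
  rw [Matrix.mul_assoc, tr1]
  refine Finset.sum_congr rfl fun i _ => Finset.sum_congr rfl fun s _ => ?_
  rw [dmat, Matrix.diagonal_mul]
  ring

lemma quadA_helper {k : ℕ} (A : Matrix (Fin k) (Fin k) ℝ) (hA : A.IsSymm)
    (hAnn : ∀ s l, 0 ≤ A s l) (x y : Fin k → ℝ) (hx : ∀ s, 0 < x s) (hy : ∀ s, 0 < y s) :
    ∑ s, ∑ l, x s * A s l * x l ≤ ∑ s, ∑ l, y l * A l s * x s ^ 2 / y s := by
  have key : ∀ s l, 2 * (x s * A s l * x l) ≤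
      y l * A l s * x s ^ 2 / y s + y s * A s l * x l ^ 2 / y l := by
    intro s l
    have hAe : A l s = A s l := by
      conv_lhs => rw [← hA]
      exact Matrix.transpose_apply A l s
    rw [hAe, div_add_div _ _ (ne_of_gt (hy s)) (ne_of_gt (hy l)),
      le_div_iff₀ (mul_pos (hy s) (hy l))]
    nlinarith [mul_nonneg (hAnn s l) (sq_nonneg (y l * x s - y s * x l)),
      mul_pos (hy s) (hy l), (hx s).le, (hx l).le]
  have swap : (∑ s, ∑ l, y l * A l s * x s ^ 2 / y s)
      = ∑ s, ∑ l, y s * A s l * x l ^ 2 / y l := Finset.sum_comm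
  have h2 : 2 * (∑ s, ∑ l, x s * A s l * x l) ≤
      2 * (∑ s, ∑ l, y l * A l s * x s ^ 2 / y s) := by
    calc 2 * (∑ s, ∑ l, x s * A s l * x l)
        = ∑ s, ∑ l, 2 * (x s * A s l * x l) := by
          simp [Finset.mul_sum]
      _ ≤ ∑ s, ∑ l, (y l * A l s * x s ^ 2 / y s + y s * A s l * x l ^ 2 / y l) := by
          exact Finset.sum_le_sum fun s _ => Finset.sum_le_sum fun l _ => key s l
      _ = (∑ s, ∑ l, y l * A l s * x s ^ 2 / y s)
          + ∑ s, ∑ l, y s * A s l * x l ^ 2 / y l := by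
          simp [Finset.sum_add_distrib]
      _ = 2 * (∑ s, ∑ l, y l * A l s * x s ^ 2 / y s) := by rw [← swap]; ring
  linarith

lemma mpos_nonneg {α β : Type*} (M : Matrix α β ℝ) (i : α) (j : β) : 0 ≤ mpos M i j := by
  have := neg_abs_le (M i j)
  simp only [mpos, Matrix.of_apply]
  linarith

lemma mneg_nonneg {α β : Type*} (M : Matrix α β ℝ) (i : α) (j : β) : 0 ≤ mneg M i j := by
  have := le_abs_self (M i j)
  simp only [mneg, Matrix.of_apply]
  linarith

lemma mpos_isSymm {k : ℕ} {A : Matrix (Fin k) (Fin k) ℝ} (h : A.IsSymm) :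
    (mpos A).IsSymm := by
  have h' : ∀ i j, A j i = A i j := fun i j => by
    conv_lhs => rw [← h]
    exact Matrix.transpose_apply A j i
  ext i j
  simp only [Matrix.transpose_apply, mpos, Matrix.of_apply, h']

/-- Lemma (auxiliary function, upper-bound part): J(V, V') ≥ F(V) for all
matrices V, V' with strictly positive entries. -/
theorem Jaux_ge_Fobj (n k : ℕ) (B₁ B₂ : Matrix (Fin n) (Fin k) ℝ)
    (A₁ A₂ : Matrix (Fin k) (Fin k) ℝ) (hA₁ : A₁.IsSymm) (hA₂ : A₂.IsSymm)
    (WP WQ : Matrix (Fin n) (Fin n) ℝ) (hWP : WP.IsSymm) (hWQ : WQ.IsSymm)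
    (hWPnn : ∀ i j, 0 ≤ WP i j) (hWQnn : ∀ i j, 0 ≤ WQ i j)
    (lam : ℝ) (hlam : 0 ≤ lam)
    (V V' : Matrix (Fin n) (Fin k) ℝ)
    (hV : ∀ i j, 0 < V i j) (hV' : ∀ i j, 0 < V' i j) :
    Fobj B₁ B₂ A₁ A₂ WP WQ lam V ≤ Jaux B₁ B₂ A₁ A₂ WP WQ lam V V' := by
  -- B⁺ terms
  have hBp : ∀ B : Matrix (Fin n) (Fin k) ℝ,
      (∑ i, ∑ s, mpos B i s * V' i s * (1 + Real.log (V i s / V' i s)))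
        ≤ ∑ i, ∑ s, mpos B i s * V i s := fun B =>
    Finset.sum_le_sum fun i _ => Finset.sum_le_sum fun s _ =>
      log_helper _ _ _ (mpos_nonneg B i s) (hV i s) (hV' i s)
  -- B⁻ terms
  have hBn : ∀ B : Matrix (Fin n) (Fin k) ℝ,
      (∑ i, ∑ s, mneg B i s * V i s)
        ≤ ∑ i, ∑ s, mneg B i s * ((V i s) ^ 2 + (V' i s) ^ 2) / (2 * V' i s) := fun B =>
    Finset.sum_le_sum fun i _ => Finset.sum_le_sum fun s _ =>
      quad_helper _ _ _ (mneg_nonneg B i s) (hV' i s)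
  -- A⁺ terms
  have hAp : ∀ A : Matrix (Fin k) (Fin k) ℝ, A.IsSymm →
      (∑ i, ∑ s, ∑ l, V i s * mpos A s l * V i l)
        ≤ ∑ i, ∑ s, (V' * mpos A) i s * (V i s) ^ 2 / V' i s := by
    intro A hA
    refine Finset.sum_le_sum fun i _ => ?_
    calc ∑ s, ∑ l, V i s * mpos A s l * V i l
        ≤ ∑ s, ∑ l, V' i l * mpos A l s * (V i s) ^ 2 / V' i s :=
          quadA_helper (mpos A) (mpos_isSymm hA) (mpos_nonneg A)
            (fun s => V i s) (fun s => V' i s) (fun s => hV i s) (fun s => hV' i s)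
      _ = ∑ s, (V' * mpos A) i s * (V i s) ^ 2 / V' i s := by
          refine Finset.sum_congr rfl fun s _ => ?_
          rw [Matrix.mul_apply, Finset.sum_mul, Finset.sum_div]
  -- A⁻ terms
  have hAn : ∀ A : Matrix (Fin k) (Fin k) ℝ,
      (∑ i, ∑ s, ∑ l, mneg A s l * V' i s * V' i l *
          (1 + Real.log (V i s * V i l / (V' i s * V' i l))))
        ≤ ∑ i, ∑ s, ∑ l, V i s * mneg A s l * V i l := by
    intro A
    refine Finset.sum_le_sum fun i _ => Finset.sum_le_sum fun s _ =>
      Finset.sum_le_sum fun l _ => ?_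
    calc mneg A s l * V' i s * V' i l *
          (1 + Real.log (V i s * V i l / (V' i s * V' i l)))
        = mneg A s l * (V' i s * V' i l) *
          (1 + Real.log (V i s * V i l / (V' i s * V' i l))) := by ring
      _ ≤ mneg A s l * (V i s * V i l) :=
          log_helper _ _ _ (mneg_nonneg A s l)
            (mul_pos (hV i s) (hV i l)) (mul_pos (hV' i s) (hV' i l))
      _ = V i s * mneg A s l * V i l := by ring
  -- W terms
  have hWt : ∀ W : Matrix (Fin n) (Fin n) ℝ, (∀ a c, 0 ≤ W a c) →
      (∑ a, ∑ c, ∑ j, W a c * V' a j * V' c j *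
          (1 + Real.log (V a j * V c j / (V' a j * V' c j))))
        ≤ ∑ a, ∑ c, ∑ j, W a c * V a j * V c j := by
    intro W hWnn
    refine Finset.sum_le_sum fun a _ => Finset.sum_le_sum fun c _ =>
      Finset.sum_le_sum fun j _ => ?_
    calc W a c * V' a j * V' c j *
          (1 + Real.log (V a j * V c j / (V' a j * V' c j)))
        = W a c * (V' a j * V' c j) *
          (1 + Real.log (V a j * V c j / (V' a j * V' c j))) := by ring
      _ ≤ W a c * (V a j * V c j) :=
          log_helper _ _ _ (hWnn a c)
            (mul_pos (hV a j) (hV c j)) (mul_pos (hV' a j) (hV' c j))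
      _ = W a c * V a j * V c j := by ring
  -- D terms (equalities)
  have hDt : ∀ W : Matrix (Fin n) (Fin n) ℝ,
      (∑ i, ∑ s, (dmat W * V') i s * (V i s) ^ 2 / V' i s)
        = ∑ i, ∑ s, (∑ j, W i j) * V i s ^ 2 := by
    intro W
    refine Finset.sum_congr rfl fun i _ => Finset.sum_congr rfl fun s _ => ?_
    rw [dmat, Matrix.diagonal_mul]
    have hne := (hV' i s).ne'
    field_simp
  have h1 := hBp B₁
  have h2 := hBn B₁
  have h3 := hAp A₁ hA₁
  have h4 := hAn A₁
  have h5 := hBp B₂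
  have h6 := hBn B₂
  have h7 := hAp A₂ hA₂
  have h8 := hAn A₂
  have h9 := mul_le_mul_of_nonneg_left (hWt WP hWPnn) hlam
  have h10 := mul_le_mul_of_nonneg_left (hWt WQ hWQnn) hlam
  rw [Fobj, Jaux, tr1, tr1, tr1, tr1, tr2, tr2, tr2, tr2, trD, trD, trW, trW,
    hDt WP, hDt WQ]
  linarith
end
end

section
/- With J as defined in the context, fix an n×k matrix V' with strictly positive entries and assume that for every index pair (i,k) the quantities (Δ₁)_{ik} = (B₁⁺ + B₂⁺ + V'(A₁⁻ + A₂⁻) + λ₂(W_P + W_Q)V')_{ik} and (Δ₂)_{ik} = (B₁⁻ + B₂⁻ + V'(A₁⁺ + A₂⁺) + λ₂(D_P + D_Q)V')_{ik} are strictly positive. Then the function V ↦ J(V, V') is convex on the set of n×k matrices with strictly positive entries: its Hessian is the diagonal matrix with entries ∂²J/∂v_{ik}² = 2(Δ₁)_{ik} v'_{ik} / v_{ik}² + 2(Δ₂)_{ik} / v'_{ik}, which are strictly positive, so the Hessian is positive definite at every such V. -/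
open Matrix BigOperators Real

noncomputable section

/-! ### Auxiliary lemmas -/

lemma sum_ite_double {n k : ℕ} (c : ℝ) (i : Fin n) (j : Fin k) :
    (∑ a : Fin n, ∑ s : Fin k, if a = i ∧ s = j then c else 0) = c := by
  have h1 : ∀ a : Fin n,
      (∑ s : Fin k, if a = i ∧ s = j then c else (0 : ℝ)) = if a = i then c else 0 := by
    intro a; by_cases h : a = i <;> simp [h]
  simp [h1]

lemma convexOn_congr' {E : Type*} [AddCommGroup E] [Module ℝ E] {s : Set E} {f g : E → ℝ}
    (hg : ConvexOn ℝ s g) (h : ∀ x ∈ s, f x = g x) : ConvexOn ℝ s f := by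
  refine ⟨hg.1, fun x hx y hy a b ha hb hab => ?_⟩
  rw [h _ (hg.1 hx hy ha hb hab), h _ hx, h _ hy]
  exact hg.2 hx hy ha hb hab

lemma convexOn_finset_sum {E : Type*} [AddCommGroup E] [Module ℝ E] {s : Set E}
    (hs : Convex ℝ s) {ι : Type*} (t : Finset ι) (f : ι → E → ℝ)
    (h : ∀ i ∈ t, ConvexOn ℝ s (f i)) :
    ConvexOn ℝ s fun x => ∑ i ∈ t, f i x := by
  classical
  revert h
  refine Finset.cons_induction_on t (fun _ => by simpa using convexOn_const (0 : ℝ) hs)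
    (fun a u ha ih h => ?_)
  simp only [Finset.sum_cons]
  exact (h a (Finset.mem_cons_self a u)).add (ih fun i hi => h i (Finset.mem_cons_of_mem hi))

lemma convex_posSet {n k : ℕ} :
    Convex ℝ {V : Matrix (Fin n) (Fin k) ℝ | ∀ i j, 0 < V i j} := by
  intro x hx y hy a b ha hb hab i j
  have h := (convex_Ioi (0 : ℝ)) (Set.mem_Ioi.2 (hx i j)) (Set.mem_Ioi.2 (hy i j)) ha hb hab
  simpa [Matrix.add_apply, Matrix.smul_apply, smul_eq_mul] using h

lemma convexOn_entry {n k : ℕ} (i : Fin n) (j : Fin k) {φ : ℝ → ℝ}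
    (hφ : ConvexOn ℝ (Set.Ioi 0) φ) :
    ConvexOn ℝ {V : Matrix (Fin n) (Fin k) ℝ | ∀ a b, 0 < V a b} (fun V => φ (V i j)) := by
  refine ⟨convex_posSet, fun x hx y hy a b ha hb hab => ?_⟩
  have h := hφ.2 (Set.mem_Ioi.2 (hx i j)) (Set.mem_Ioi.2 (hy i j)) ha hb hab
  simpa [Matrix.add_apply, Matrix.smul_apply, smul_eq_mul] using h

lemma phi_convex (q bb : ℝ) (hq : 0 ≤ q) (hb : 0 ≤ bb) :
    ConvexOn ℝ (Set.Ioi 0) (fun t : ℝ => q * t ^ 2 - bb * Real.log t) := by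
  have h1 : ConvexOn ℝ (Set.Ioi (0 : ℝ)) (fun t : ℝ => q * t ^ 2) := by
    have h := ((Even.convexOn_pow (even_two : Even 2)).subset (Set.subset_univ _)
      (convex_Ioi (0 : ℝ))).smul hq
    simpa [smul_eq_mul] using h
  have h2 : ConcaveOn ℝ (Set.Ioi (0 : ℝ)) (fun t : ℝ => bb * Real.log t) := by
    have h := (strictConcaveOn_log_Ioi.concaveOn).smul hb
    simpa [smul_eq_mul] using h
  exact h1.sub h2

lemma mneg_isSymm {k : ℕ} (A : Matrix (Fin k) (Fin k) ℝ) (hA : A.IsSymm) :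
    (mneg A).IsSymm := by
  apply Matrix.ext
  intro i j
  simp only [Matrix.transpose_apply, mneg, Matrix.of_apply]
  rw [hA.apply i j]

/-! ### Key decomposition -/

lemma key_decomp {n k : ℕ} (B₁ B₂ : Matrix (Fin n) (Fin k) ℝ)
    (A₁ A₂ : Matrix (Fin k) (Fin k) ℝ) (hA₁ : A₁.IsSymm) (hA₂ : A₂.IsSymm)
    (WP WQ : Matrix (Fin n) (Fin n) ℝ) (hWP : WP.IsSymm) (hWQ : WQ.IsSymm)
    (lam : ℝ) (V' : Matrix (Fin n) (Fin k) ℝ) (hV' : ∀ i j, 0 < V' i j)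
    (Δ₁ Δ₂ : Matrix (Fin n) (Fin k) ℝ)
    (hΔ₁def : Δ₁ = mpos B₁ + mpos B₂ + V' * (mneg A₁ + mneg A₂)
        + lam • ((WP + WQ) * V'))
    (hΔ₂def : Δ₂ = mneg B₁ + mneg B₂ + V' * (mpos A₁ + mpos A₂)
        + lam • ((dmat WP + dmat WQ) * V')) :
    ∃ C : ℝ, ∀ V : Matrix (Fin n) (Fin k) ℝ, (∀ i j, 0 < V i j) →
      Jaux B₁ B₂ A₁ A₂ WP WQ lam V V'
        = (∑ i, ∑ s, (Δ₂ i s / V' i s * (V i s) ^ 2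
            - 2 * Δ₁ i s * V' i s * Real.log (V i s))) + C := by
  have hV'ne : ∀ i j, V' i j ≠ 0 := fun i j => (hV' i j).ne'
  refine ⟨-2 * (∑ i, ∑ s, mpos B₁ i s * V' i s * (1 - Real.log (V' i s)))
      + 2 * (∑ i, ∑ s, mneg B₁ i s * V' i s / 2)
      - (∑ i, ∑ s, ∑ l, mneg A₁ s l * V' i s * V' i l *
          (1 - Real.log (V' i s) - Real.log (V' i l)))
      - 2 * (∑ i, ∑ s, mpos B₂ i s * V' i s * (1 - Real.log (V' i s)))
      + 2 * (∑ i, ∑ s, mneg B₂ i s * V' i s / 2)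
      - (∑ i, ∑ s, ∑ l, mneg A₂ s l * V' i s * V' i l *
          (1 - Real.log (V' i s) - Real.log (V' i l)))
      - lam * (∑ a, ∑ c, ∑ j, WP a c * V' a j * V' c j *
          (1 - Real.log (V' a j) - Real.log (V' c j)))
      - lam * (∑ a, ∑ c, ∑ j, WQ a c * V' a j * V' c j *
          (1 - Real.log (V' a j) - Real.log (V' c j))), fun V hV => ?_⟩
  have hVne : ∀ i j, V i j ≠ 0 := fun i j => (hV i j).ne'
  -- log-split for linear B-type terms
  have H1 : ∀ M : Matrix (Fin n) (Fin k) ℝ,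
      (∑ i, ∑ s, M i s * V' i s * (1 + Real.log (V i s / V' i s)))
        = (∑ i, ∑ s, M i s * V' i s * Real.log (V i s))
          + ∑ i, ∑ s, M i s * V' i s * (1 - Real.log (V' i s)) := by
    intro M
    simp only [← Finset.sum_add_distrib]
    refine Finset.sum_congr rfl fun i _ => Finset.sum_congr rfl fun s _ => ?_
    rw [Real.log_div (hVne i s) (hV'ne i s)]
    ring
  -- split for quadratic B-type terms
  have H4 : ∀ M : Matrix (Fin n) (Fin k) ℝ,
      (∑ i, ∑ s, M i s * ((V i s) ^ 2 + (V' i s) ^ 2) / (2 * V' i s))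
        = (∑ i, ∑ s, M i s / V' i s * (V i s) ^ 2 / 2)
          + ∑ i, ∑ s, M i s * V' i s / 2 := by
    intro M
    simp only [← Finset.sum_add_distrib]
    refine Finset.sum_congr rfl fun i _ => Finset.sum_congr rfl fun s _ => ?_
    field_simp [hV'ne i s]
  -- split for A-type triple sums
  have H2 : ∀ A : Matrix (Fin k) (Fin k) ℝ, A.IsSymm →
      (∑ i, ∑ s, ∑ l, A s l * V' i s * V' i l *
          (1 + Real.log (V i s * V i l / (V' i s * V' i l))))
        = 2 * (∑ i, ∑ s, (V' * A) i s * V' i s * Real.log (V i s))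
          + ∑ i, ∑ s, ∑ l, A s l * V' i s * V' i l *
              (1 - Real.log (V' i s) - Real.log (V' i l)) := by
    intro A hA
    have e1 : (∑ i, ∑ s, ∑ l, A s l * V' i s * V' i l * Real.log (V i s))
        = ∑ i, ∑ s, (V' * A) i s * V' i s * Real.log (V i s) := by
      refine Finset.sum_congr rfl fun i _ => Finset.sum_congr rfl fun s _ => ?_
      rw [Matrix.mul_apply, Finset.sum_mul, Finset.sum_mul]
      refine Finset.sum_congr rfl fun l _ => ?_
      rw [hA.apply l s]
      ring
    have e2 : (∑ i, ∑ s, ∑ l, A s l * V' i s * V' i l * Real.log (V i l))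
        = ∑ i, ∑ s, (V' * A) i s * V' i s * Real.log (V i s) := by
      refine Finset.sum_congr rfl fun i _ => ?_
      rw [Finset.sum_comm]
      refine Finset.sum_congr rfl fun l _ => ?_
      rw [Matrix.mul_apply, Finset.sum_mul, Finset.sum_mul]
      refine Finset.sum_congr rfl fun s _ => ?_
      ring
    have estep : (∑ i, ∑ s, ∑ l, A s l * V' i s * V' i l *
          (1 + Real.log (V i s * V i l / (V' i s * V' i l))))
        = (∑ i, ∑ s, ∑ l, A s l * V' i s * V' i l * Real.log (V i s))
          + ((∑ i, ∑ s, ∑ l, A s l * V' i s * V' i l * Real.log (V i l))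
          + ∑ i, ∑ s, ∑ l, A s l * V' i s * V' i l *
              (1 - Real.log (V' i s) - Real.log (V' i l))) := by
      simp only [← Finset.sum_add_distrib]
      refine Finset.sum_congr rfl fun i _ => Finset.sum_congr rfl fun s _ =>
        Finset.sum_congr rfl fun l _ => ?_
      rw [Real.log_div (mul_ne_zero (hVne i s) (hVne i l))
          (mul_ne_zero (hV'ne i s) (hV'ne i l)),
        Real.log_mul (hVne i s) (hVne i l), Real.log_mul (hV'ne i s) (hV'ne i l)]
      ring
    rw [estep, e1, e2]
    ring
  -- split for W-type triple sums
  have H3 : ∀ W : Matrix (Fin n) (Fin n) ℝ, W.IsSymm →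
      (∑ a, ∑ c, ∑ j, W a c * V' a j * V' c j *
          (1 + Real.log (V a j * V c j / (V' a j * V' c j))))
        = 2 * (∑ a, ∑ j, (W * V') a j * V' a j * Real.log (V a j))
          + ∑ a, ∑ c, ∑ j, W a c * V' a j * V' c j *
              (1 - Real.log (V' a j) - Real.log (V' c j)) := by
    intro W hW
    have e1 : (∑ a, ∑ c, ∑ j, W a c * V' a j * V' c j * Real.log (V a j))
        = ∑ a, ∑ j, (W * V') a j * V' a j * Real.log (V a j) := by
      refine Finset.sum_congr rfl fun a _ => ?_
      rw [Finset.sum_comm]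
      refine Finset.sum_congr rfl fun j _ => ?_
      rw [Matrix.mul_apply, Finset.sum_mul, Finset.sum_mul]
      refine Finset.sum_congr rfl fun c _ => ?_
      ring
    have e2 : (∑ a, ∑ c, ∑ j, W a c * V' a j * V' c j * Real.log (V c j))
        = ∑ a, ∑ j, (W * V') a j * V' a j * Real.log (V a j) := by
      rw [Finset.sum_comm]
      refine Finset.sum_congr rfl fun c _ => ?_
      rw [Finset.sum_comm]
      refine Finset.sum_congr rfl fun j _ => ?_
      rw [Matrix.mul_apply, Finset.sum_mul, Finset.sum_mul]
      refine Finset.sum_congr rfl fun a _ => ?_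
      rw [hW.apply c a]
    have estep : (∑ a, ∑ c, ∑ j, W a c * V' a j * V' c j *
          (1 + Real.log (V a j * V c j / (V' a j * V' c j))))
        = (∑ a, ∑ c, ∑ j, W a c * V' a j * V' c j * Real.log (V a j))
          + ((∑ a, ∑ c, ∑ j, W a c * V' a j * V' c j * Real.log (V c j))
          + ∑ a, ∑ c, ∑ j, W a c * V' a j * V' c j *
              (1 - Real.log (V' a j) - Real.log (V' c j))) := by
      simp only [← Finset.sum_add_distrib]
      refine Finset.sum_congr rfl fun a _ => Finset.sum_congr rfl fun c _ =>
        Finset.sum_congr rfl fun j _ => ?_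
      rw [Real.log_div (mul_ne_zero (hVne a j) (hVne c j))
          (mul_ne_zero (hV'ne a j) (hV'ne c j)),
        Real.log_mul (hVne a j) (hVne c j), Real.log_mul (hV'ne a j) (hV'ne c j)]
      ring
    rw [estep, e1, e2]
    ring
  -- split of the model sum into the atoms above
  have Hsplit : (∑ i, ∑ s, (Δ₂ i s / V' i s * (V i s) ^ 2
        - 2 * Δ₁ i s * V' i s * Real.log (V i s)))
      = 2 * (∑ i, ∑ s, mneg B₁ i s / V' i s * (V i s) ^ 2 / 2)
        + 2 * (∑ i, ∑ s, mneg B₂ i s / V' i s * (V i s) ^ 2 / 2)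
        + (∑ i, ∑ s, (V' * mpos A₁) i s * (V i s) ^ 2 / V' i s)
        + (∑ i, ∑ s, (V' * mpos A₂) i s * (V i s) ^ 2 / V' i s)
        + lam * (∑ i, ∑ s, (dmat WP * V') i s * (V i s) ^ 2 / V' i s)
        + lam * (∑ i, ∑ s, (dmat WQ * V') i s * (V i s) ^ 2 / V' i s)
        - 2 * (∑ i, ∑ s, mpos B₁ i s * V' i s * Real.log (V i s))
        - 2 * (∑ i, ∑ s, mpos B₂ i s * V' i s * Real.log (V i s))
        - 2 * (∑ i, ∑ s, (V' * mneg A₁) i s * V' i s * Real.log (V i s))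
        - 2 * (∑ i, ∑ s, (V' * mneg A₂) i s * V' i s * Real.log (V i s))
        - lam * (2 * (∑ a, ∑ j, (WP * V') a j * V' a j * Real.log (V a j)))
        - lam * (2 * (∑ a, ∑ j, (WQ * V') a j * V' a j * Real.log (V a j))) := by
    simp only [hΔ₁def, hΔ₂def, Matrix.mul_add, Matrix.add_mul, Matrix.add_apply,
      Matrix.smul_apply, smul_eq_mul]
    simp only [Finset.mul_sum]
    simp only [← Finset.sum_add_distrib, ← Finset.sum_sub_distrib]
    refine Finset.sum_congr rfl fun i _ => Finset.sum_congr rfl fun s _ => ?_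
    ring
  -- assemble
  simp only [Jaux]
  rw [Hsplit, H1 (mpos B₁), H1 (mpos B₂), H4 (mneg B₁), H4 (mneg B₂),
    H2 (mneg A₁) (mneg_isSymm A₁ hA₁), H2 (mneg A₂) (mneg_isSymm A₂ hA₂),
    H3 WP hWP, H3 WQ hWQ]
  ring

/-- Lemma (auxiliary function, convexity part): with Δ₁, Δ₂ entrywise positive,
V ↦ J(V, V') is convex on the set of entrywise positive matrices; its Hessian is
diagonal with entries ∂²J/∂v²ᵢⱼ = 2(Δ₁)ᵢⱼ v'ᵢⱼ / vᵢⱼ² + 2(Δ₂)ᵢⱼ / v'ᵢⱼ, which are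
strictly positive. -/
theorem Jaux_convex (n k : ℕ) (B₁ B₂ : Matrix (Fin n) (Fin k) ℝ)
    (A₁ A₂ : Matrix (Fin k) (Fin k) ℝ) (hA₁ : A₁.IsSymm) (hA₂ : A₂.IsSymm)
    (WP WQ : Matrix (Fin n) (Fin n) ℝ) (hWP : WP.IsSymm) (hWQ : WQ.IsSymm)
    (hWPnn : ∀ i j, 0 ≤ WP i j) (hWQnn : ∀ i j, 0 ≤ WQ i j)
    (lam : ℝ) (hlam : 0 ≤ lam)
    (V' : Matrix (Fin n) (Fin k) ℝ) (hV' : ∀ i j, 0 < V' i j)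
    (Δ₁ Δ₂ : Matrix (Fin n) (Fin k) ℝ)
    (hΔ₁def : Δ₁ = mpos B₁ + mpos B₂ + V' * (mneg A₁ + mneg A₂)
        + lam • ((WP + WQ) * V'))
    (hΔ₂def : Δ₂ = mneg B₁ + mneg B₂ + V' * (mpos A₁ + mpos A₂)
        + lam • ((dmat WP + dmat WQ) * V'))
    (hΔ₁ : ∀ i j, 0 < Δ₁ i j) (hΔ₂ : ∀ i j, 0 < Δ₂ i j) :
    ConvexOn ℝ {V : Matrix (Fin n) (Fin k) ℝ | ∀ i j, 0 < V i j}
      (fun V => Jaux B₁ B₂ A₁ A₂ WP WQ lam V V') ∧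
    (∀ V : Matrix (Fin n) (Fin k) ℝ, (∀ i j, 0 < V i j) → ∀ i j,
      iteratedDeriv 2
          (fun t : ℝ => Jaux B₁ B₂ A₁ A₂ WP WQ lam
            (Matrix.of fun a b => if a = i ∧ b = j then t else V a b) V')
          (V i j)
        = 2 * Δ₁ i j * V' i j / (V i j) ^ 2 + 2 * Δ₂ i j / V' i j) ∧
    (∀ V : Matrix (Fin n) (Fin k) ℝ, (∀ i j, 0 < V i j) → ∀ i j,
      0 < 2 * Δ₁ i j * V' i j / (V i j) ^ 2 + 2 * Δ₂ i j / V' i j) := by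
  obtain ⟨C, hkey⟩ := key_decomp B₁ B₂ A₁ A₂ hA₁ hA₂ WP WQ hWP hWQ lam V' hV' Δ₁ Δ₂
    hΔ₁def hΔ₂def
  refine ⟨?_, ?_, ?_⟩
  · -- convexity
    have hentry : ∀ (i : Fin n) (s : Fin k),
        ConvexOn ℝ {V : Matrix (Fin n) (Fin k) ℝ | ∀ i j, 0 < V i j}
          (fun V : Matrix (Fin n) (Fin k) ℝ =>
            Δ₂ i s / V' i s * (V i s) ^ 2 - 2 * Δ₁ i s * V' i s * Real.log (V i s)) := by
      intro i s
      have hq : (0 : ℝ) ≤ Δ₂ i s / V' i s := le_of_lt (div_pos (hΔ₂ i s) (hV' i s))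
      have hb : (0 : ℝ) ≤ 2 * Δ₁ i s * V' i s :=
        le_of_lt (mul_pos (mul_pos two_pos (hΔ₁ i s)) (hV' i s))
      exact convexOn_entry i s (phi_convex _ _ hq hb)
    have hg : ConvexOn ℝ {V : Matrix (Fin n) (Fin k) ℝ | ∀ i j, 0 < V i j}
        (fun V : Matrix (Fin n) (Fin k) ℝ =>
          (∑ i, ∑ s, (Δ₂ i s / V' i s * (V i s) ^ 2
            - 2 * Δ₁ i s * V' i s * Real.log (V i s))) + C) := by
      refine ConvexOn.add_const ?_ C
      exact convexOn_finset_sum convex_posSet Finset.univ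
        (fun i V => ∑ s, (Δ₂ i s / V' i s * (V i s) ^ 2
          - 2 * Δ₁ i s * V' i s * Real.log (V i s)))
        (fun i _ => convexOn_finset_sum convex_posSet Finset.univ
          (fun s V => Δ₂ i s / V' i s * (V i s) ^ 2
            - 2 * Δ₁ i s * V' i s * Real.log (V i s))
          (fun s _ => hentry i s))
    exact convexOn_congr' hg (fun V hVmem => hkey V hVmem)
  · -- second derivative
    intro V hVpos i j
    have hx : 0 < V i j := hVpos i j
    have hV'ij : 0 < V' i j := hV' i j
    set q : ℝ := Δ₂ i j / V' i j with hqdef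
    set bb : ℝ := 2 * Δ₁ i j * V' i j with hbdef
    set r : ℝ := C + (∑ a, ∑ s, (Δ₂ a s / V' a s * (V a s) ^ 2
        - 2 * Δ₁ a s * V' a s * Real.log (V a s)))
      - (q * (V i j) ^ 2 - bb * Real.log (V i j)) with hrdef
    have hfeq : ∀ t ∈ Set.Ioi (0 : ℝ),
        Jaux B₁ B₂ A₁ A₂ WP WQ lam
            (Matrix.of fun a b => if a = i ∧ b = j then t else V a b) V'
          = q * t ^ 2 - bb * Real.log t + r := by
      intro t ht
      have htpos : (0 : ℝ) < t := ht
      have hVt : ∀ a b, 0 < (Matrix.of fun a b => if a = i ∧ b = j then t else V a b) a b := by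
        intro a b
        simp only [Matrix.of_apply]
        split_ifs
        · exact htpos
        · exact hVpos a b
      rw [hkey _ hVt]
      have hper : ∀ (a : Fin n) (s : Fin k),
          Δ₂ a s / V' a s *
              ((Matrix.of fun a b => if a = i ∧ b = j then t else V a b) a s) ^ 2
            - 2 * Δ₁ a s * V' a s *
              Real.log ((Matrix.of fun a b => if a = i ∧ b = j then t else V a b) a s)
          = (Δ₂ a s / V' a s * (V a s) ^ 2 - 2 * Δ₁ a s * V' a s * Real.log (V a s))
            + (if a = i ∧ s = j then
                ((q * t ^ 2 - bb * Real.log t) - (q * (V i j) ^ 2 - bb * Real.log (V i j)))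
              else 0) := by
        intro a s
        by_cases h : a = i ∧ s = j
        · obtain ⟨rfl, rfl⟩ := h
          simp only [Matrix.of_apply, eq_self_iff_true, and_self, if_true, hqdef, hbdef]
          ring
        · simp only [Matrix.of_apply, if_neg h]
          ring
      rw [Finset.sum_congr rfl fun a _ => Finset.sum_congr rfl fun s _ => hper a s]
      simp only [Finset.sum_add_distrib]
      rw [sum_ite_double]
      rw [hrdef]
      ring
    have hmem : Set.Ioi (0 : ℝ) ∈ nhds (V i j) := Ioi_mem_nhds hx
    have hEv : (fun t : ℝ => Jaux B₁ B₂ A₁ A₂ WP WQ lam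
          (Matrix.of fun a b => if a = i ∧ b = j then t else V a b) V')
        =ᶠ[nhds (V i j)] (fun t : ℝ => q * t ^ 2 - bb * Real.log t + r) :=
      Filter.eventuallyEq_of_mem hmem hfeq
    have hD : deriv (fun t : ℝ => q * t ^ 2 - bb * Real.log t + r)
        =ᶠ[nhds (V i j)] (fun t : ℝ => 2 * q * t - bb * t⁻¹) := by
      filter_upwards [hmem] with t ht
      have htpos : (0 : ℝ) < t := ht
      have h1 : HasDerivAt (fun u : ℝ => q * u ^ 2 - bb * Real.log u + r)
          (2 * q * t - bb * t⁻¹) t := by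
        have hp : HasDerivAt (fun u : ℝ => u ^ 2) (2 * t) t := by
          simpa using hasDerivAt_pow 2 t
        have h := ((hp.const_mul q).sub
          ((Real.hasDerivAt_log htpos.ne').const_mul bb)).add_const r
        exact h.congr_deriv (by ring)
      exact h1.deriv
    have hfinal : iteratedDeriv 2
        (fun t : ℝ => Jaux B₁ B₂ A₁ A₂ WP WQ lam
          (Matrix.of fun a b => if a = i ∧ b = j then t else V a b) V') (V i j)
        = deriv (fun t : ℝ => 2 * q * t - bb * t⁻¹) (V i j) := by
      rw [show (2 : ℕ) = 1 + 1 from rfl, iteratedDeriv_succ, iteratedDeriv_one]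
      exact ((hEv.deriv).trans hD).deriv_eq
    have hlast : HasDerivAt (fun t : ℝ => 2 * q * t - bb * t⁻¹)
        (2 * q - bb * (-((V i j) ^ 2)⁻¹)) (V i j) := by
      have h2 : HasDerivAt (fun t : ℝ => t) 1 (V i j) := hasDerivAt_id _
      have h := (h2.const_mul (2 * q)).sub ((hasDerivAt_inv hx.ne').const_mul bb)
      exact h.congr_deriv (by ring)
    rw [hfinal, hlast.deriv, hqdef, hbdef]
    field_simp
    ring
  · -- positivity
    intro V hVpos i j
    have h1 : (0 : ℝ) < 2 * Δ₁ i j * V' i j / (V i j) ^ 2 :=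
      div_pos (mul_pos (mul_pos two_pos (hΔ₁ i j)) (hV' i j)) (pow_pos (hVpos i j) 2)
    have h2 : (0 : ℝ) < 2 * Δ₂ i j / V' i j :=
      div_pos (mul_pos two_pos (hΔ₂ i j)) (hV' i j)
    exact add_pos h1 h2

end
end

section
/- (Theorem 1, descent part.) With F as defined in the context, let V be an n×k matrix with strictly positive entries and assume that for every index pair (i,j) the quantities (Δ₁)_{ij} = (B₁⁺ + B₂⁺ + V(A₁⁻ + A₂⁻) + λ₂(W_P + W_Q)V)_{ij} and (Δ₂)_{ij} = (B₁⁻ + B₂⁻ + V(A₁⁺ + A₂⁺) + λ₂(D_P + D_Q)V)_{ij} are strictly positive. Define the multiplicative update V_new entrywise by (V_new)_{ij} = v_{ij} · sqrt( (Δ₁)_{ij} / (Δ₂)_{ij} ). Then F(V_new) ≤ F(V); i.e., the value of F is monotonically non-increasing under this update. -/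
open Matrix BigOperators Real

noncomputable section

lemma mpos_symm {k : ℕ} {A : Matrix (Fin k) (Fin k) ℝ} (h : A.IsSymm) (s l : Fin k) :
    mpos A s l = mpos A l s := by
  simp only [mpos, Matrix.of_apply]
  rw [← h.apply s l]

lemma mneg_symm {k : ℕ} {A : Matrix (Fin k) (Fin k) ℝ} (h : A.IsSymm) (s l : Fin k) :
    mneg A s l = mneg A l s := by
  simp only [mneg, Matrix.of_apply]
  rw [← h.apply s l]

-- trace forms
lemma trace_VtM {n k : ℕ} (V M : Matrix (Fin n) (Fin k) ℝ) :
    Matrix.trace (Vᵀ * M) = ∑ i, ∑ s, V i s * M i s := by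
  simp only [Matrix.trace, Matrix.diag, Matrix.mul_apply, Matrix.transpose_apply]
  rw [Finset.sum_comm]

lemma trace_VAVt {n k : ℕ} (V : Matrix (Fin n) (Fin k) ℝ) (A : Matrix (Fin k) (Fin k) ℝ) :
    Matrix.trace (V * A * Vᵀ) = ∑ i, ∑ s, ∑ l, V i s * A s l * V i l := by
  simp only [Matrix.trace, Matrix.diag, Matrix.mul_apply, Matrix.transpose_apply,
    Finset.sum_mul]
  exact Finset.sum_congr rfl fun i _ => Finset.sum_comm

lemma trace_dmat {n k : ℕ} (V : Matrix (Fin n) (Fin k) ℝ) (W : Matrix (Fin n) (Fin n) ℝ) :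
    Matrix.trace (Vᵀ * dmat W * V) = ∑ i, ∑ s, (∑ j, W i j) * (V i s)^2 := by
  simp only [Matrix.trace, Matrix.diag, Matrix.mul_apply, Matrix.transpose_apply, dmat,
    Matrix.diagonal_apply, ite_mul, zero_mul, Finset.sum_ite_eq, Finset.mem_univ, if_true]
  rw [Finset.sum_comm]
  refine Finset.sum_congr rfl fun i _ => Finset.sum_congr rfl fun s _ => ?_
  simp only [mul_ite, mul_zero, Finset.sum_ite_eq' Finset.univ i, Finset.mem_univ, if_true]
  ring

lemma pt_lin_pos {b u v : ℝ} (hb : 0 ≤ b) (hu : 0 < u) (hv : 0 < v) :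
    b * v * (Real.log u - Real.log v) ≤ b * (u - v) := by
  have h := Real.log_le_sub_one_of_pos (div_pos hu hv)
  rw [Real.log_div hu.ne' hv.ne'] at h
  have h2 : v * (Real.log u - Real.log v) ≤ u - v := by
    have h3 := mul_le_mul_of_nonneg_left h hv.le
    have h4 : v * (u / v - 1) = u - v := by field_simp
    rw [h4] at h3; exact h3
  calc b * v * (Real.log u - Real.log v) = b * (v * (Real.log u - Real.log v)) := by ring
    _ ≤ b * (u - v) := mul_le_mul_of_nonneg_left h2 hb

lemma sum_lin_pos {n k : ℕ} (B U V : Matrix (Fin n) (Fin k) ℝ)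
    (hB : ∀ i s, 0 ≤ B i s) (hU : ∀ i s, 0 < U i s) (hV : ∀ i s, 0 < V i s) :
    ∑ i, ∑ s, B i s * V i s * (Real.log (U i s) - Real.log (V i s))
      ≤ ∑ i, ∑ s, B i s * (U i s - V i s) :=
  Finset.sum_le_sum fun i _ => Finset.sum_le_sum fun s _ =>
    pt_lin_pos (hB i s) (hU i s) (hV i s)

lemma sum_lin_neg {n k : ℕ} (B U V : Matrix (Fin n) (Fin k) ℝ)
    (hB : ∀ i s, 0 ≤ B i s) (hV : ∀ i s, 0 < V i s) :
    ∑ i, ∑ s, 2 * (B i s * (U i s - V i s))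
      ≤ ∑ i, ∑ s, B i s * ((U i s)^2 - (V i s)^2) / V i s := by
  refine Finset.sum_le_sum fun i _ => Finset.sum_le_sum fun s _ => ?_
  have hv := hV i s
  rw [le_div_iff₀ hv]
  nlinarith [mul_nonneg (hB i s) (sq_nonneg (U i s - V i s))]

-- quadratic bound (Lee–Seung)
lemma sum_quad {n k : ℕ} (A : Matrix (Fin k) (Fin k) ℝ)
    (hAs : ∀ s l, A s l = A l s) (hA : ∀ s l, 0 ≤ A s l)
    (U V : Matrix (Fin n) (Fin k) ℝ) (hV : ∀ i s, 0 < V i s) :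
    ∑ i, ∑ s, ∑ l, U i s * A s l * U i l
      ≤ ∑ i, ∑ s, (∑ l, V i l * A l s) * (U i s)^2 / V i s := by
  refine Finset.sum_le_sum fun i _ => ?_
  set f : Fin k → Fin k → ℝ := fun s l => V i l * A l s * (U i s)^2 / V i s with hf
  have hrhs : ∑ s, (∑ l, V i l * A l s) * (U i s)^2 / V i s = ∑ s, ∑ l, f s l := by
    refine Finset.sum_congr rfl fun s _ => ?_
    rw [Finset.sum_mul, Finset.sum_div]
  rw [hrhs]
  have hsym : ∑ s, ∑ l, f s l = ∑ s, ∑ l, f l s := Finset.sum_comm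
  have h2 : 2 * (∑ s, ∑ l, U i s * A s l * U i l) ≤ 2 * (∑ s, ∑ l, f s l) := by
    have : 2 * (∑ s, ∑ l, f s l) = ∑ s, ∑ l, (f s l + f l s) := by
      rw [two_mul]
      nth_rewrite 2 [hsym]
      rw [← Finset.sum_add_distrib]
      exact Finset.sum_congr rfl fun s _ => (Finset.sum_add_distrib).symm
    rw [this, Finset.mul_sum]
    refine Finset.sum_le_sum fun s _ => ?_
    rw [Finset.mul_sum]
    refine Finset.sum_le_sum fun l _ => ?_
    -- pointwise: 2 * (U_s A_{sl} U_l) ≤ f s l + f l s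
    have hp := hV i s; have hq := hV i l
    have hAls : A l s = A s l := hAs l s
    simp only [hf, hAls]
    rw [div_add_div _ _ hp.ne' hq.ne', le_div_iff₀ (mul_pos hp hq)]
    nlinarith [sq_nonneg (V i l * U i s - V i s * U i l), hA s l,
      mul_pos hp hq, sq_nonneg (U i s), sq_nonneg (U i l),
      mul_nonneg (hA s l) (sq_nonneg (V i l * U i s - V i s * U i l))]
  linarith

-- log bound for the negative quadratic terms
lemma sum_logq {n k : ℕ} (A : Matrix (Fin k) (Fin k) ℝ)
    (hAs : ∀ s l, A s l = A l s) (hA : ∀ s l, 0 ≤ A s l)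
    (U V : Matrix (Fin n) (Fin k) ℝ) (hU : ∀ i s, 0 < U i s) (hV : ∀ i s, 0 < V i s) :
    ∑ i, ∑ s, ∑ l, V i s * A s l * V i l
      + ∑ i, ∑ s, 2 * ((∑ l, V i l * A l s) * V i s * (Real.log (U i s) - Real.log (V i s)))
      ≤ ∑ i, ∑ s, ∑ l, U i s * A s l * U i l := by
  rw [← Finset.sum_add_distrib]
  refine Finset.sum_le_sum fun i _ => ?_
  rw [← Finset.sum_add_distrib]
  -- middle term symmetrization
  set g : Fin k → Fin k → ℝ := fun s l =>
    A s l * V i s * V i l * (Real.log (U i s) - Real.log (V i s)) with hg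
  have hmid : ∀ s, 2 * ((∑ l, V i l * A l s) * V i s * (Real.log (U i s) - Real.log (V i s)))
      = ∑ l, (g s l + g s l) := by
    intro s
    have hone : (∑ l, V i l * A l s) * V i s * (Real.log (U i s) - Real.log (V i s))
        = ∑ l, g s l := by
      rw [Finset.sum_mul, Finset.sum_mul]
      refine Finset.sum_congr rfl fun l _ => ?_
      simp only [hg]
      rw [hAs s l]; ring
    rw [two_mul, hone, ← Finset.sum_add_distrib]
  -- goal : ∑ s (∑ l V A V + 2(..)) ≤ ∑ s ∑ l U A U
  have key : ∑ s, (∑ l, V i s * A s l * V i l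
        + 2 * ((∑ l, V i l * A l s) * V i s * (Real.log (U i s) - Real.log (V i s))))
      = ∑ s, ∑ l, (V i s * A s l * V i l + g s l + g l s) := by
    have hswap : ∑ s, ∑ l, g s l = ∑ s, ∑ l, g l s := Finset.sum_comm
    calc ∑ s, (∑ l, V i s * A s l * V i l
          + 2 * ((∑ l, V i l * A l s) * V i s * (Real.log (U i s) - Real.log (V i s))))
        = ∑ s, ∑ l, (V i s * A s l * V i l + g s l) + ∑ s, ∑ l, g s l := by
          rw [← Finset.sum_add_distrib]
          refine Finset.sum_congr rfl fun s _ => ?_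
          rw [hmid s, ← Finset.sum_add_distrib, ← Finset.sum_add_distrib]
          exact Finset.sum_congr rfl fun l _ => by ring
      _ = ∑ s, ∑ l, (V i s * A s l * V i l + g s l) + ∑ s, ∑ l, g l s := by rw [hswap]
      _ = ∑ s, ∑ l, (V i s * A s l * V i l + g s l + g l s) := by
          rw [← Finset.sum_add_distrib]
          exact Finset.sum_congr rfl fun s _ => (Finset.sum_add_distrib).symm
  rw [key]
  refine Finset.sum_le_sum fun s _ => Finset.sum_le_sum fun l _ => ?_
  -- pointwise : V_s A V_l + A V_s V_l (log Us - log Vs) + A V_l V_s (log Ul - log Vl) ≤ U_s A U_l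
  simp only [hg]
  have hAls : A l s = A s l := hAs l s
  rw [hAls]
  have hps := hV i s; have hpl := hV i l
  have hus := hU i s; have hul := hU i l
  rcases (eq_or_lt_of_le (hA s l)).imp Eq.symm id with h0 | hpos
  · simp [h0]
  · have hx : (0:ℝ) < U i s * U i l / (V i s * V i l) :=
      div_pos (mul_pos hus hul) (mul_pos hps hpl)
    have hlog := Real.log_le_sub_one_of_pos hx
    rw [Real.log_div (mul_pos hus hul).ne' (mul_pos hps hpl).ne',
      Real.log_mul hus.ne' hul.ne', Real.log_mul hps.ne' hpl.ne'] at hlog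
    -- hlog : log Us + log Ul - (log Vs + log Vl) ≤ UsUl/(VsVl) - 1
    have hmul := mul_le_mul_of_nonneg_left hlog (mul_pos hps hpl).le
    have hc : V i s * V i l * (U i s * U i l / (V i s * V i l) - 1)
        = U i s * U i l - V i s * V i l := by field_simp
    rw [hc] at hmul
    nlinarith [hpos.le, mul_le_mul_of_nonneg_left hmul hpos.le]

lemma descent_pt (v d1 d2 : ℝ) (hv : 0 < v) (h1 : 0 < d1) (h2 : 0 < d2) :
    d2 * ((v * Real.sqrt (d1/d2))^2 - v^2) / v
      - 2 * d1 * v * (Real.log (v * Real.sqrt (d1/d2)) - Real.log v) ≤ 0 := by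
  have hdd : 0 < d1 / d2 := div_pos h1 h2
  have hs : 0 < Real.sqrt (d1/d2) := Real.sqrt_pos.mpr hdd
  have hsq : (Real.sqrt (d1/d2))^2 = d1/d2 := Real.sq_sqrt hdd.le
  have hlog : Real.log (v * Real.sqrt (d1/d2)) - Real.log v
      = (Real.log d1 - Real.log d2) / 2 := by
    rw [Real.log_mul hv.ne' hs.ne', Real.log_sqrt hdd.le, Real.log_div h1.ne' h2.ne']
    ring
  have hA : d2 * ((v * Real.sqrt (d1/d2))^2 - v^2) / v = v * (d1 - d2) := by
    rw [mul_pow, hsq]; field_simp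
  rw [hA, hlog]
  -- goal: v*(d1-d2) - 2*d1*v*((log d1 - log d2)/2) ≤ 0
  have hl := Real.log_le_sub_one_of_pos (div_pos h2 h1)
  rw [Real.log_div h2.ne' h1.ne'] at hl
  -- hl : log d2 - log d1 ≤ d2/d1 - 1
  have hm := mul_le_mul_of_nonneg_left hl h1.le
  have hc : d1 * (d2/d1 - 1) = d2 - d1 := by field_simp
  rw [hc] at hm
  -- hm : d1*(log d2 - log d1) ≤ d2 - d1, so d1 - d2 ≤ d1*(log d1 - log d2)
  nlinarith [mul_le_mul_of_nonneg_left hm hv.le]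

section comps
variable {n k : ℕ}

-- component lemma (i): positive linear parts
lemma comp_lin_pos (B U V : Matrix (Fin n) (Fin k) ℝ)
    (hB : ∀ i s, 0 ≤ B i s) (hU : ∀ i s, 0 < U i s) (hV : ∀ i s, 0 < V i s) :
    -2 * Matrix.trace (Uᵀ * B) + 2 * Matrix.trace (Vᵀ * B)
      ≤ ∑ i, ∑ s, (-2) * (B i s * V i s * (Real.log (U i s) - Real.log (V i s))) := by
  have h := sum_lin_pos B U V hB hU hV
  have e1 : Matrix.trace (Uᵀ * B) - Matrix.trace (Vᵀ * B)
      = ∑ i, ∑ s, B i s * (U i s - V i s) := by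
    rw [trace_VtM, trace_VtM, ← Finset.sum_sub_distrib]
    refine Finset.sum_congr rfl fun i _ => ?_
    rw [← Finset.sum_sub_distrib]
    exact Finset.sum_congr rfl fun s _ => by ring
  have e2 : ∑ i, ∑ s, (-2) * (B i s * V i s * (Real.log (U i s) - Real.log (V i s)))
      = (-2) * ∑ i, ∑ s, B i s * V i s * (Real.log (U i s) - Real.log (V i s)) := by
    rw [Finset.mul_sum]
    exact Finset.sum_congr rfl fun i _ => (Finset.mul_sum _ _ _).symm
  rw [e2]
  linarith

lemma comp_lin_neg (B U V : Matrix (Fin n) (Fin k) ℝ)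
    (hB : ∀ i s, 0 ≤ B i s) (hV : ∀ i s, 0 < V i s) :
    2 * Matrix.trace (Uᵀ * B) - 2 * Matrix.trace (Vᵀ * B)
      ≤ ∑ i, ∑ s, B i s * ((U i s)^2 - (V i s)^2) / V i s := by
  have h := sum_lin_neg B U V hB hV
  have e1 : 2 * Matrix.trace (Uᵀ * B) - 2 * Matrix.trace (Vᵀ * B)
      = ∑ i, ∑ s, 2 * (B i s * (U i s - V i s)) := by
    rw [trace_VtM, trace_VtM, Finset.mul_sum, Finset.mul_sum, ← Finset.sum_sub_distrib]
    refine Finset.sum_congr rfl fun i _ => ?_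
    rw [Finset.mul_sum, Finset.mul_sum, ← Finset.sum_sub_distrib]
    exact Finset.sum_congr rfl fun s _ => by ring
  rw [e1]
  exact h

lemma comp_quad (A : Matrix (Fin k) (Fin k) ℝ)
    (hAs : ∀ s l, A s l = A l s) (hA : ∀ s l, 0 ≤ A s l)
    (U V : Matrix (Fin n) (Fin k) ℝ) (hV : ∀ i s, 0 < V i s) :
    Matrix.trace (U * A * Uᵀ) - Matrix.trace (V * A * Vᵀ)
      ≤ ∑ i, ∑ s, (∑ l, V i l * A l s) * ((U i s)^2 - (V i s)^2) / V i s := by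
  have h := sum_quad A hAs hA U V hV
  have e2 : ∑ i, ∑ s, (∑ l, V i l * A l s) * ((U i s)^2 - (V i s)^2) / V i s
      = (∑ i, ∑ s, (∑ l, V i l * A l s) * (U i s)^2 / V i s)
        - ∑ i, ∑ s, ∑ l, V i s * A s l * V i l := by
    rw [← Finset.sum_sub_distrib]
    refine Finset.sum_congr rfl fun i _ => ?_
    rw [← Finset.sum_sub_distrib]
    refine Finset.sum_congr rfl fun s _ => ?_
    have hv := (hV i s).ne'
    have e3 : (∑ l, V i l * A l s) * (V i s)^2 / V i s = ∑ l, V i s * A s l * V i l := by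
      rw [mul_div_assoc, sq, mul_div_assoc, div_self hv, mul_one, Finset.sum_mul]
      refine Finset.sum_congr rfl fun l _ => ?_
      rw [hAs l s]; ring
    rw [← e3, mul_sub, sub_div, mul_div_assoc, mul_div_assoc]
  rw [trace_VAVt, trace_VAVt, e2]
  linarith

lemma comp_logq (A : Matrix (Fin k) (Fin k) ℝ)
    (hAs : ∀ s l, A s l = A l s) (hA : ∀ s l, 0 ≤ A s l)
    (U V : Matrix (Fin n) (Fin k) ℝ) (hU : ∀ i s, 0 < U i s) (hV : ∀ i s, 0 < V i s) :
    -Matrix.trace (U * A * Uᵀ) + Matrix.trace (V * A * Vᵀ)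
      ≤ ∑ i, ∑ s, (-2) * ((∑ l, V i l * A l s) * V i s *
          (Real.log (U i s) - Real.log (V i s))) := by
  have h := sum_logq A hAs hA U V hU hV
  have e2 : ∑ i, ∑ s, (-2) * ((∑ l, V i l * A l s) * V i s *
        (Real.log (U i s) - Real.log (V i s)))
      = -∑ i, ∑ s, 2 * ((∑ l, V i l * A l s) * V i s *
        (Real.log (U i s) - Real.log (V i s))) := by
    rw [← Finset.sum_neg_distrib]
    refine Finset.sum_congr rfl fun i _ => ?_
    rw [← Finset.sum_neg_distrib]
    exact Finset.sum_congr rfl fun s _ => by ring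
  rw [trace_VAVt, trace_VAVt, e2]
  linarith

lemma comp_deg (W : Matrix (Fin n) (Fin n) ℝ) (lam : ℝ)
    (U V : Matrix (Fin n) (Fin k) ℝ) :
    lam * Matrix.trace (Uᵀ * dmat W * U) - lam * Matrix.trace (Vᵀ * dmat W * V)
      = ∑ i, ∑ s, lam * ((∑ j, W i j) * ((U i s)^2 - (V i s)^2)) := by
  rw [trace_dmat, trace_dmat, Finset.mul_sum, Finset.mul_sum, ← Finset.sum_sub_distrib]
  refine Finset.sum_congr rfl fun i _ => ?_
  rw [Finset.mul_sum, Finset.mul_sum, ← Finset.sum_sub_distrib]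
  exact Finset.sum_congr rfl fun s _ => by ring

lemma comp_W (W : Matrix (Fin n) (Fin n) ℝ)
    (hWs : ∀ a c, W a c = W c a) (hW : ∀ a c, 0 ≤ W a c)
    (lam : ℝ) (hlam : 0 ≤ lam)
    (U V : Matrix (Fin n) (Fin k) ℝ) (hU : ∀ i s, 0 < U i s) (hV : ∀ i s, 0 < V i s) :
    -(lam * Matrix.trace (Uᵀ * W * U)) + lam * Matrix.trace (Vᵀ * W * V)
      ≤ ∑ i, ∑ s, lam * ((-2) * ((∑ c, W i c * V c s) * V i s *
          (Real.log (U i s) - Real.log (V i s)))) := by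
  have base := comp_logq W (fun a c => hWs a c) hW Uᵀ Vᵀ
    (fun i s => hU s i) (fun i s => hV s i)
  rw [Matrix.transpose_transpose, Matrix.transpose_transpose] at base
  have e1 : ∑ j, ∑ a, (-2) * ((∑ c, Vᵀ j c * W c a) * Vᵀ j a *
        (Real.log (Uᵀ j a) - Real.log (Vᵀ j a)))
      = ∑ i, ∑ s, (-2) * ((∑ c, W i c * V c s) * V i s *
        (Real.log (U i s) - Real.log (V i s))) := by
    rw [Finset.sum_comm]
    refine Finset.sum_congr rfl fun a _ => Finset.sum_congr rfl fun j _ => ?_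
    simp only [Matrix.transpose_apply]
    congr 2
    refine congrArg (· * V a j) ?_
    exact Finset.sum_congr rfl fun c _ => by rw [hWs a c]; ring
  rw [e1] at base
  have e2 : ∑ i, ∑ s, lam * ((-2) * ((∑ c, W i c * V c s) * V i s *
        (Real.log (U i s) - Real.log (V i s))))
      = lam * ∑ i, ∑ s, (-2) * ((∑ c, W i c * V c s) * V i s *
        (Real.log (U i s) - Real.log (V i s))) := by
    rw [Finset.mul_sum]
    exact Finset.sum_congr rfl fun i _ => (Finset.mul_sum _ _ _).symm
  rw [e2]
  have := mul_le_mul_of_nonneg_left base hlam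
  calc -(lam * Matrix.trace (Uᵀ * W * U)) + lam * Matrix.trace (Vᵀ * W * V)
      = lam * (-Matrix.trace (Uᵀ * W * Uᵀᵀ) + Matrix.trace (Vᵀ * W * Vᵀᵀ)) := by
        rw [Matrix.transpose_transpose, Matrix.transpose_transpose]; ring
    _ ≤ lam * ∑ i, ∑ s, (-2) * ((∑ c, W i c * V c s) * V i s *
        (Real.log (U i s) - Real.log (V i s))) := by
        rw [Matrix.transpose_transpose, Matrix.transpose_transpose]
        exact this

end comps


/-- Theorem 1 (descent part): the multiplicative update
(V_new)ᵢⱼ = vᵢⱼ √((Δ₁)ᵢⱼ/(Δ₂)ᵢⱼ) does not increase the objective F. -/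
theorem multiplicative_update_descent (n k : ℕ)
    (B₁ B₂ : Matrix (Fin n) (Fin k) ℝ)
    (A₁ A₂ : Matrix (Fin k) (Fin k) ℝ) (hA₁ : A₁.IsSymm) (hA₂ : A₂.IsSymm)
    (WP WQ : Matrix (Fin n) (Fin n) ℝ) (hWP : WP.IsSymm) (hWQ : WQ.IsSymm)
    (hWPnn : ∀ i j, 0 ≤ WP i j) (hWQnn : ∀ i j, 0 ≤ WQ i j)
    (lam : ℝ) (hlam : 0 ≤ lam)
    (V : Matrix (Fin n) (Fin k) ℝ) (hV : ∀ i j, 0 < V i j)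
    (Δ₁ Δ₂ : Matrix (Fin n) (Fin k) ℝ)
    (hΔ₁def : Δ₁ = mpos B₁ + mpos B₂ + V * (mneg A₁ + mneg A₂)
        + lam • ((WP + WQ) * V))
    (hΔ₂def : Δ₂ = mneg B₁ + mneg B₂ + V * (mpos A₁ + mpos A₂)
        + lam • ((dmat WP + dmat WQ) * V))
    (hΔ₁ : ∀ i j, 0 < Δ₁ i j) (hΔ₂ : ∀ i j, 0 < Δ₂ i j)
    (Vnew : Matrix (Fin n) (Fin k) ℝ)
    (hVnew : ∀ i j, Vnew i j = V i j * Real.sqrt (Δ₁ i j / Δ₂ i j)) :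
    Fobj B₁ B₂ A₁ A₂ WP WQ lam Vnew ≤ Fobj B₁ B₂ A₁ A₂ WP WQ lam V := by
  have hU : ∀ i j, 0 < Vnew i j := fun i j => by
    rw [hVnew i j]
    exact mul_pos (hV i j) (Real.sqrt_pos.mpr (div_pos (hΔ₁ i j) (hΔ₂ i j)))
  -- entrywise formulas for Δ₁, Δ₂
  have hΔ₁e : ∀ i s, Δ₁ i s = mpos B₁ i s + mpos B₂ i s
      + (∑ l, V i l * mneg A₁ l s) + (∑ l, V i l * mneg A₂ l s)
      + lam * (∑ c, WP i c * V c s) + lam * (∑ c, WQ i c * V c s) := by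
    intro i s
    rw [hΔ₁def]
    simp only [Matrix.add_apply, Matrix.smul_apply, Matrix.mul_apply, smul_eq_mul,
      mul_add, add_mul, Finset.sum_add_distrib]
    ring
  have hΔ₂e : ∀ i s, Δ₂ i s = mneg B₁ i s + mneg B₂ i s
      + (∑ l, V i l * mpos A₁ l s) + (∑ l, V i l * mpos A₂ l s)
      + lam * ((∑ j, WP i j) * V i s) + lam * ((∑ j, WQ i j) * V i s) := by
    intro i s
    rw [hΔ₂def]
    simp only [Matrix.add_apply, Matrix.smul_apply, Matrix.mul_apply, smul_eq_mul,
      Matrix.add_mul, dmat, Matrix.diagonal_mul, mul_add, Finset.sum_add_distrib,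
      Matrix.diagonal_apply, ite_mul, zero_mul, Finset.sum_ite_eq, Finset.mem_univ, if_true]
    ring
  -- the decrease of the auxiliary function
  set dlog : Fin n → Fin k → ℝ :=
    fun i s => Real.log (Vnew i s) - Real.log (V i s) with hdlog
  have hD0 : ∑ i, ∑ s, (Δ₂ i s * ((Vnew i s)^2 - (V i s)^2) / V i s
      - 2 * Δ₁ i s * V i s * dlog i s) ≤ 0 := by
    refine Finset.sum_nonpos fun i _ => Finset.sum_nonpos fun s _ => ?_
    simp only [hdlog]
    rw [hVnew i s]
    exact descent_pt (V i s) (Δ₁ i s) (Δ₂ i s) (hV i s) (hΔ₁ i s) (hΔ₂ i s)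
  -- split into twelve pieces
  have hpt : ∀ i s, Δ₂ i s * ((Vnew i s)^2 - (V i s)^2) / V i s
        - 2 * Δ₁ i s * V i s * dlog i s
      = mneg B₁ i s * ((Vnew i s)^2 - (V i s)^2) / V i s
      + mneg B₂ i s * ((Vnew i s)^2 - (V i s)^2) / V i s
      + (∑ l, V i l * mpos A₁ l s) * ((Vnew i s)^2 - (V i s)^2) / V i s
      + (∑ l, V i l * mpos A₂ l s) * ((Vnew i s)^2 - (V i s)^2) / V i s
      + lam * ((∑ j, WP i j) * ((Vnew i s)^2 - (V i s)^2))
      + lam * ((∑ j, WQ i j) * ((Vnew i s)^2 - (V i s)^2))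
      + (-2) * (mpos B₁ i s * V i s * dlog i s)
      + (-2) * (mpos B₂ i s * V i s * dlog i s)
      + (-2) * ((∑ l, V i l * mneg A₁ l s) * V i s * dlog i s)
      + (-2) * ((∑ l, V i l * mneg A₂ l s) * V i s * dlog i s)
      + lam * ((-2) * ((∑ c, WP i c * V c s) * V i s * dlog i s))
      + lam * ((-2) * ((∑ c, WQ i c * V c s) * V i s * dlog i s)) := by
    intro i s
    rw [hΔ₁e i s, hΔ₂e i s]
    have hv := (hV i s).ne'
    field_simp
    ring
  have hsplit : ∑ i, ∑ s, (Δ₂ i s * ((Vnew i s)^2 - (V i s)^2) / V i s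
        - 2 * Δ₁ i s * V i s * dlog i s)
      = (∑ i, ∑ s, mneg B₁ i s * ((Vnew i s)^2 - (V i s)^2) / V i s)
      + (∑ i, ∑ s, mneg B₂ i s * ((Vnew i s)^2 - (V i s)^2) / V i s)
      + (∑ i, ∑ s, (∑ l, V i l * mpos A₁ l s) * ((Vnew i s)^2 - (V i s)^2) / V i s)
      + (∑ i, ∑ s, (∑ l, V i l * mpos A₂ l s) * ((Vnew i s)^2 - (V i s)^2) / V i s)
      + (∑ i, ∑ s, lam * ((∑ j, WP i j) * ((Vnew i s)^2 - (V i s)^2)))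
      + (∑ i, ∑ s, lam * ((∑ j, WQ i j) * ((Vnew i s)^2 - (V i s)^2)))
      + (∑ i, ∑ s, (-2) * (mpos B₁ i s * V i s * dlog i s))
      + (∑ i, ∑ s, (-2) * (mpos B₂ i s * V i s * dlog i s))
      + (∑ i, ∑ s, (-2) * ((∑ l, V i l * mneg A₁ l s) * V i s * dlog i s))
      + (∑ i, ∑ s, (-2) * ((∑ l, V i l * mneg A₂ l s) * V i s * dlog i s))
      + (∑ i, ∑ s, lam * ((-2) * ((∑ c, WP i c * V c s) * V i s * dlog i s)))
      + (∑ i, ∑ s, lam * ((-2) * ((∑ c, WQ i c * V c s) * V i s * dlog i s))) := by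
    rw [Finset.sum_congr rfl fun i _ => Finset.sum_congr rfl fun s _ => hpt i s]
    simp only [Finset.sum_add_distrib]
  -- component inequalities
  have i1 := comp_lin_pos (mpos B₁) Vnew V (fun i s => mpos_nonneg B₁ i s) hU hV
  have i2 := comp_lin_pos (mpos B₂) Vnew V (fun i s => mpos_nonneg B₂ i s) hU hV
  have i3 := comp_lin_neg (mneg B₁) Vnew V (fun i s => mneg_nonneg B₁ i s) hV
  have i4 := comp_lin_neg (mneg B₂) Vnew V (fun i s => mneg_nonneg B₂ i s) hV
  have i5 := comp_quad (mpos A₁) (mpos_symm hA₁) (fun s l => mpos_nonneg A₁ s l) Vnew V hV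
  have i6 := comp_quad (mpos A₂) (mpos_symm hA₂) (fun s l => mpos_nonneg A₂ s l) Vnew V hV
  have i7 := comp_logq (mneg A₁) (mneg_symm hA₁) (fun s l => mneg_nonneg A₁ s l) Vnew V hU hV
  have i8 := comp_logq (mneg A₂) (mneg_symm hA₂) (fun s l => mneg_nonneg A₂ s l) Vnew V hU hV
  have i9 := comp_deg WP lam Vnew V
  have i10 := comp_deg WQ lam Vnew V
  have i11 := comp_W WP (fun a c => (hWP.apply c a)) hWPnn lam hlam Vnew V hU hV
  have i12 := comp_W WQ (fun a c => (hWQ.apply c a)) hWQnn lam hlam Vnew V hU hV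
  simp only [Fobj]
  simp only [hdlog] at hsplit hD0
  linarith [i1, i2, i3, i4, i5, i6, i7, i8, i9, i10, i11, i12, hsplit, hD0]
end
end

section
/- (Theorem 1, KKT part.) With the matrices as defined in the context, let V be an n×k matrix with nonnegative entries that is a fixed point of the multiplicative update: for every (i,j), v_{ij} = v_{ij} · sqrt( (B₁⁺ + B₂⁺ + V(A₁⁻ + A₂⁻) + λ₂(W_P + W_Q)V)_{ij} / (B₁⁻ + B₂⁻ + V(A₁⁺ + A₂⁺) + λ₂(D_P + D_Q)V)_{ij} ), where each denominator entry is strictly positive. Then V satisfies the fixed-point (complementary slackness / KKT) equation ( −2B₁ − 2B₂ + 2V(A₁ + A₂) + 2λ₂(L_P + L_Q)V )_{ij} · v_{ij}² = 0 for all (i,j), where L_P = D_P − W_P and L_Q = D_Q − W_Q. -/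
open Matrix BigOperators Real

noncomputable section

/-- Theorem 1 (KKT part): a nonnegative fixed point of the multiplicative update
satisfies the complementary-slackness (KKT) fixed-point equation
(−2B₁ − 2B₂ + 2V(A₁+A₂) + 2λ₂(L_P+L_Q)V)ᵢⱼ · vᵢⱼ² = 0. -/
theorem multiplicative_update_kkt (n k : ℕ)
    (B₁ B₂ : Matrix (Fin n) (Fin k) ℝ)
    (A₁ A₂ : Matrix (Fin k) (Fin k) ℝ) (hA₁ : A₁.IsSymm) (hA₂ : A₂.IsSymm)
    (WP WQ : Matrix (Fin n) (Fin n) ℝ) (hWP : WP.IsSymm) (hWQ : WQ.IsSymm)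
    (hWPnn : ∀ i j, 0 ≤ WP i j) (hWQnn : ∀ i j, 0 ≤ WQ i j)
    (lam : ℝ) (hlam : 0 ≤ lam)
    (LP LQ : Matrix (Fin n) (Fin n) ℝ)
    (hLP : LP = dmat WP - WP) (hLQ : LQ = dmat WQ - WQ)
    (V : Matrix (Fin n) (Fin k) ℝ) (hV : ∀ i j, 0 ≤ V i j)
    (hden : ∀ i j,
      0 < (mneg B₁ + mneg B₂ + V * (mpos A₁ + mpos A₂)
            + lam • ((dmat WP + dmat WQ) * V)) i j)
    (hfix : ∀ i j, V i j = V i j * Real.sqrt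
      ((mpos B₁ + mpos B₂ + V * (mneg A₁ + mneg A₂)
          + lam • ((WP + WQ) * V)) i j /
        (mneg B₁ + mneg B₂ + V * (mpos A₁ + mpos A₂)
          + lam • ((dmat WP + dmat WQ) * V)) i j)) :
    ∀ i j,
      ((-2 : ℝ) • B₁ + (-2 : ℝ) • B₂ + (2 : ℝ) • (V * (A₁ + A₂))
          + (2 * lam) • ((LP + LQ) * V)) i j * (V i j) ^ 2 = 0 := by
  intro i j
  by_cases hv : V i j = 0
  · simp [hv]
  · have hd := hden i j
    have hfx := hfix i j
    have h1 : Real.sqrt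
        ((mpos B₁ + mpos B₂ + V * (mneg A₁ + mneg A₂)
            + lam • ((WP + WQ) * V)) i j /
          (mneg B₁ + mneg B₂ + V * (mpos A₁ + mpos A₂)
            + lam • ((dmat WP + dmat WQ) * V)) i j) = 1 := by
      have h := hfx
      nth_rewrite 1 [← mul_one (V i j)] at h
      exact (mul_left_cancel₀ hv h).symm
    have h2 := Real.sqrt_eq_one.mp h1
    have hND : (mpos B₁ + mpos B₂ + V * (mneg A₁ + mneg A₂)
            + lam • ((WP + WQ) * V)) i j
        = (mneg B₁ + mneg B₂ + V * (mpos A₁ + mpos A₂)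
            + lam • ((dmat WP + dmat WQ) * V)) i j :=
      (div_eq_one_iff_eq hd.ne').mp h2
    have hG : ((-2 : ℝ) • B₁ + (-2 : ℝ) • B₂ + (2 : ℝ) • (V * (A₁ + A₂))
          + (2 * lam) • ((LP + LQ) * V)) i j = 0 := by
      subst hLP hLQ
      simp only [Matrix.add_apply, Matrix.smul_apply, Matrix.mul_apply,
        Matrix.sub_apply, Matrix.sub_mul, Matrix.add_mul, mpos, mneg,
        Matrix.of_apply, smul_eq_mul] at hND ⊢
      simp only [mul_add, mul_sub, add_div, sub_div, ← mul_div_assoc,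
        Finset.sum_add_distrib, Finset.sum_sub_distrib, ← Finset.sum_div]
        at hND ⊢
      ring_nf at hND ⊢
      linarith [hND]
    rw [hG, zero_mul]

end
end
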